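/- Let a_1, ..., a_C be real numbers in [0,1] and define the running averages A_c = (1/c)*(a_1 + ... + a_c). Suppose that for every c in {2,...,C}, |A_{c-1} - a_c| <= eps. Then for every c in {1,...,C}, |A_C - a_c| <= eps * (1 + sum_{c'=c+1}^{C} 2/c'), and hence for any c, c' in {1,...,C}, |a_c - a_{c'}| <= 2*eps*(1 + sum_{k=2}^{C} 2/k) <= 2*eps*(1 + 2*log C + 2). -/

import Mathlib

theorem running_average_chaining (C : ℕ) (hC : 0 < C) (eps : ℝ) (heps : 0 ≤ eps)
    (a : ℕ → ℝ) (ha : ∀ c ∈ Finset.Icc 1 C, a c ∈ Set.Icc (0 : ℝ) 1)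
    (A : ℕ → ℝ) (hA : ∀ c, A c = (1 / (c : ℝ)) * ∑ k ∈ Finset.Icc 1 c, a k)
    (hclose : ∀ c ∈ Finset.Icc 2 C, |A (c - 1) - a c| ≤ eps) :
    (∀ c ∈ Finset.Icc 1 C,
        |A C - a c| ≤ eps * (1 + ∑ c' ∈ Finset.Icc (c + 1) C, 2 / (c' : ℝ))) ∧
    (∀ c ∈ Finset.Icc 1 C, ∀ c' ∈ Finset.Icc 1 C,
        |a c - a c'| ≤ 2 * eps * (1 + ∑ k ∈ Finset.Icc 2 C, 2 / (k : ℝ)) ∧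
        2 * eps * (1 + ∑ k ∈ Finset.Icc 2 C, 2 / (k : ℝ))
          ≤ 2 * eps * (1 + 2 * Real.log C + 2)) := by
  -- recursion for A
  have hrec : ∀ n : ℕ, 1 ≤ n →
      A (n + 1) = A n + (1 / ((n : ℝ) + 1)) * (a (n + 1) - A n) := by
    intro n hn
    have hn0 : (n : ℝ) ≠ 0 := Nat.cast_ne_zero.mpr (by omega)
    have hn1 : ((n : ℝ) + 1) ≠ 0 := by positivity
    have hsum : ∑ k ∈ Finset.Icc 1 (n + 1), a k
        = (∑ k ∈ Finset.Icc 1 n, a k) + a (n + 1) := by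
      rw [← Finset.sum_Icc_succ_top (by omega)]
    have hS : ∑ k ∈ Finset.Icc 1 n, a k = (n : ℝ) * A n := by
      rw [hA n]; field_simp
    rw [hA (n + 1), hsum, hS]
    push_cast
    field_simp
    ring
  -- main induction
  have hmain : ∀ c, 1 ≤ c → ∀ n, c ≤ n → n ≤ C →
      |A n - a c| ≤ eps * (1 + ∑ c' ∈ Finset.Icc (c + 1) n, 2 / (c' : ℝ)) := by
    intro c hc n hcn hnC
    induction n, hcn using Nat.le_induction with
    | base =>
        rw [Finset.Icc_eq_empty (by omega), Finset.sum_empty, add_zero, mul_one]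
        rcases eq_or_lt_of_le hc with h1 | h2
        · have : A c = a c := by
            rw [hA c, ← h1]
            norm_num
          simp [this, heps]
        · have hc2 : 2 ≤ c := h2
          have hrc := hrec (c - 1) (by omega)
          have hc1 : c - 1 + 1 = c := by omega
          rw [hc1] at hrc
          have hcl := hclose c (Finset.mem_Icc.mpr ⟨hc2, hnC⟩)
          have hcast : ((c - 1 : ℕ) : ℝ) + 1 = (c : ℝ) := by
            push_cast [Nat.cast_sub (by omega : 1 ≤ c)]; ring
          rw [hcast] at hrc
          have hc0 : (1:ℝ) ≤ (c:ℝ) := by exact_mod_cast hc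
          have hkey : A c - a c = (1 - 1/(c:ℝ)) * (A (c-1) - a c) := by
            rw [hrc]; field_simp; ring
          rw [hkey, abs_mul]
          have h1c : 1/(c:ℝ) ≤ 1 := by rw [div_le_one (by linarith)]; linarith
          have h1c0 : 0 ≤ 1/(c:ℝ) := by positivity
          calc |1 - 1/(c:ℝ)| * |A (c-1) - a c| ≤ 1 * eps := by
                apply mul_le_mul _ hcl (abs_nonneg _) zero_le_one
                rw [abs_of_nonneg (by linarith)]; linarith
            _ = eps := one_mul eps
    | succ n hn ih =>
        have ih' := ih (by omega)
        have hn1 : 1 ≤ n := le_trans hc hn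
        have hrc := hrec n hn1
        have hcl := hclose (n + 1) (Finset.mem_Icc.mpr ⟨by omega, hnC⟩)
        simp only [Nat.add_sub_cancel] at hcl
        have habs : |A (n+1) - a c| ≤ |A n - a c| + (1 / ((n:ℝ)+1)) * eps := by
          have h1 : A (n+1) - a c = (A n - a c) + (1 / ((n:ℝ)+1)) * (a (n+1) - A n) := by
            rw [hrc]; ring
          rw [h1]
          refine (abs_add_le _ _).trans ?_
          gcongr
          rw [abs_mul, abs_of_pos (by positivity : (0:ℝ) < 1/((n:ℝ)+1))]
          gcongr
          rw [abs_sub_comm]; exact hcl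
        have hsum : ∑ c' ∈ Finset.Icc (c + 1) (n+1), 2 / (c' : ℝ)
            = (∑ c' ∈ Finset.Icc (c + 1) n, 2 / (c' : ℝ)) + 2 / ((n:ℝ)+1) := by
          rw [Finset.sum_Icc_succ_top (by omega : c + 1 ≤ n + 1)]
          push_cast; ring
        rw [hsum]
        calc |A (n+1) - a c| ≤ |A n - a c| + (1 / ((n:ℝ)+1)) * eps := habs
          _ ≤ eps * (1 + ∑ c' ∈ Finset.Icc (c + 1) n, 2 / (c' : ℝ)) + (2 / ((n:ℝ)+1)) * eps := by
              refine add_le_add ih' (mul_le_mul_of_nonneg_right ?_ heps)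
              gcongr
              norm_num
          _ = eps * (1 + ((∑ c' ∈ Finset.Icc (c + 1) n, 2 / (c' : ℝ)) + 2 / ((n:ℝ)+1))) := by ring
  have part1 : ∀ c ∈ Finset.Icc 1 C,
      |A C - a c| ≤ eps * (1 + ∑ c' ∈ Finset.Icc (c + 1) C, 2 / (c' : ℝ)) := by
    intro c hc
    obtain ⟨h1, h2⟩ := Finset.mem_Icc.mp hc
    exact hmain c h1 C h2 le_rfl
  -- monotone bound
  have hmono : ∀ c ∈ Finset.Icc 1 C,
      |A C - a c| ≤ eps * (1 + ∑ k ∈ Finset.Icc 2 C, 2 / (k : ℝ)) := by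
    intro c hc
    obtain ⟨h1, h2⟩ := Finset.mem_Icc.mp hc
    refine (part1 c hc).trans ?_
    apply mul_le_mul_of_nonneg_left _ heps
    apply add_le_add_right
    apply Finset.sum_le_sum_of_subset_of_nonneg
    · apply Finset.Icc_subset_Icc_left; omega
    · intro i _ _; positivity
  -- harmonic bound
  have hharm : ∑ k ∈ Finset.Icc 2 C, 2 / (k : ℝ) ≤ 2 * Real.log C + 2 := by
    have hins : Finset.Icc 1 C = insert 1 (Finset.Icc 2 C) := by
      ext x; simp [Finset.mem_Icc]; omega
    have h1n : (1:ℕ) ∉ Finset.Icc 2 C := by simp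
    have hsum1 : ∑ k ∈ Finset.Icc 1 C, ((k : ℝ))⁻¹ = ((harmonic C : ℚ) : ℝ) := by
      rw [harmonic_eq_sum_Icc]; push_cast; rfl
    have hsum2 : ∑ k ∈ Finset.Icc 1 C, ((k : ℝ))⁻¹
        = 1 + ∑ k ∈ Finset.Icc 2 C, ((k : ℝ))⁻¹ := by
      rw [hins, Finset.sum_insert h1n]; norm_num
    have hle : ((harmonic C : ℚ) : ℝ) ≤ 1 + Real.log C := harmonic_le_one_add_log C
    have h2k : ∑ k ∈ Finset.Icc 2 C, 2 / (k : ℝ)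
        = 2 * ∑ k ∈ Finset.Icc 2 C, ((k : ℝ))⁻¹ := by
      rw [Finset.mul_sum]; apply Finset.sum_congr rfl; intro k _; rw [div_eq_mul_inv]
    rw [h2k]
    nlinarith [hsum1, hsum2, hle]
  refine ⟨part1, fun c hc c' hc' => ⟨?_, ?_⟩⟩
  · calc |a c - a c'| ≤ |A C - a c| + |A C - a c'| := by
          rw [abs_sub_comm (A C) (a c)]; exact abs_sub_le (a c) (A C) (a c')
      _ ≤ eps * (1 + ∑ k ∈ Finset.Icc 2 C, 2 / (k : ℝ))
            + eps * (1 + ∑ k ∈ Finset.Icc 2 C, 2 / (k : ℝ)) :=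
          add_le_add (hmono c hc) (hmono c' hc')
      _ = 2 * eps * (1 + ∑ k ∈ Finset.Icc 2 C, 2 / (k : ℝ)) := by ring
  · have h2e : 0 ≤ 2 * eps := by linarith
    apply mul_le_mul_of_nonneg_left _ h2e
    linarith [hharm]
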